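/- Let σ be the ReLU function and b ∈ ℝ. For i ≥ 2, the i-th Hermite coefficient of z ↦ ReLU(z + b) with respect to the standard Gaussian satisfies E_{z~N(0,1)}[ReLU(z+b) He_i(z)] = ((−1)^i/√(2π)) e^{−b²/2} He_{i−2}(b). -/

import Mathlib

open MeasureTheory ProbabilityTheory Polynomial Filter Real Set

/-- The k-th probabilists' Hermite polynomial evaluated at `t : ℝ`. -/
noncomputable def He (k : ℕ) (t : ℝ) : ℝ := Polynomial.aeval t (Polynomial.hermite k)

/-- The Gaussian kernel `exp (-(x^2/2))`. -/
noncomputable def Gk (x : ℝ) : ℝ := Real.exp (-(x ^ 2 / 2))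

lemma Gk_hasDerivAt (x : ℝ) : HasDerivAt Gk (-x * Gk x) x := by
  have h1 : HasDerivAt (fun x : ℝ => -(x ^ 2 / 2)) (-x) x := by
    have := ((hasDerivAt_pow 2 x).div_const 2).neg
    exact this.congr_deriv (by ring)
  have h2 := h1.exp
  have : HasDerivAt (fun x : ℝ => Real.exp (-(x ^ 2 / 2))) (-x * Real.exp (-(x ^ 2 / 2))) x := by
    convert h2 using 1
    ring
  exact this

lemma pow_mul_Gk_eq (n : ℕ) :
    (fun x : ℝ => x ^ (n : ℝ) * Real.exp (-(1/2 : ℝ) * x ^ 2)) =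
      fun x : ℝ => x ^ n * Gk x := by
  funext x
  rw [Real.rpow_natCast]
  congr 1
  unfold Gk
  congr 1
  ring

lemma pow_mul_Gk_integrable (n : ℕ) : Integrable (fun x : ℝ => x ^ n * Gk x) := by
  have h := integrable_rpow_mul_exp_neg_mul_sq (b := (1:ℝ)/2) (by norm_num) (s := (n : ℝ))
    (lt_of_lt_of_le neg_one_lt_zero (Nat.cast_nonneg n))
  rw [pow_mul_Gk_eq] at h
  exact h

lemma pow_mul_Gk_tendsto (n : ℕ) :
    Tendsto (fun x : ℝ => x ^ n * Gk x) atTop (nhds 0) := by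
  have h := rpow_mul_exp_neg_mul_sq_isLittleO_exp_neg (b := (1:ℝ)/2) (by norm_num) (n : ℝ)
  have hhalf : Tendsto (fun x : ℝ => -(1/2 : ℝ) * x) atTop atBot := by
    have h2 : Tendsto (fun x : ℝ => x / 2) atTop atTop :=
      tendsto_id.atTop_div_const (by norm_num)
    have h3 := tendsto_neg_atTop_atBot.comp h2
    refine h3.congr fun x => ?_
    simp only [Function.comp]
    ring
  have h0 : Tendsto (fun x : ℝ => Real.exp (-(1/2 : ℝ) * x)) atTop (nhds 0) :=
    Real.tendsto_exp_atBot.comp hhalf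
  have h1 := h.tendsto_zero_of_tendsto h0
  rw [pow_mul_Gk_eq] at h1
  exact h1

lemma poly_mul_Gk_integrable (q : ℝ[X]) : Integrable (fun x : ℝ => q.eval x * Gk x) := by
  have : (fun x : ℝ => q.eval x * Gk x) =
      fun x => ∑ k ∈ Finset.range (q.natDegree + 1), q.coeff k * (x ^ k * Gk x) := by
    funext x
    rw [Polynomial.eval_eq_sum_range, Finset.sum_mul]
    simp [mul_assoc]
  rw [this]
  exact integrable_finset_sum _ fun k _ => (pow_mul_Gk_integrable k).const_mul _

lemma poly_mul_Gk_tendsto (q : ℝ[X]) :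
    Tendsto (fun x : ℝ => q.eval x * Gk x) atTop (nhds 0) := by
  have : (fun x : ℝ => q.eval x * Gk x) =
      fun x => ∑ k ∈ Finset.range (q.natDegree + 1), q.coeff k * (x ^ k * Gk x) := by
    funext x
    rw [Polynomial.eval_eq_sum_range, Finset.sum_mul]
    simp [mul_assoc]
  rw [this]
  have := tendsto_finset_sum (Finset.range (q.natDegree + 1))
    (fun k _ => ((pow_mul_Gk_tendsto k).const_mul (q.coeff k)))
  simpa using this

lemma He_eval_map (n : ℕ) (x : ℝ) :
    He n x = ((Polynomial.hermite n).map (algebraMap ℤ ℝ)).eval x := by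
  rw [He, Polynomial.eval_map, Polynomial.aeval_def]

lemma He_neg (n : ℕ) (x : ℝ) : He n (-x) = (-1) ^ n * He n x := by
  unfold He
  rw [Polynomial.aeval_eq_sum_range, Polynomial.aeval_eq_sum_range, Finset.mul_sum]
  refine Finset.sum_congr rfl fun k _ => ?_
  by_cases h : (Polynomial.hermite n).coeff k = 0
  · simp [h]
  · have hev : Even (n + k) := by
      by_contra hodd
      exact h (Polynomial.coeff_hermite_of_odd_add (Nat.not_even_iff_odd.mp hodd))
    have hkn : (-1 : ℝ) ^ k = (-1) ^ n := by
      rcases Nat.even_or_odd n with hn | hn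
      · have hk : Even k := (Nat.even_add.mp hev).mp hn
        rw [hk.neg_one_pow, hn.neg_one_pow]
      · have hk : Odd k := by
          rcases Nat.even_or_odd k with hk | hk
          · exact absurd ((Nat.even_add.mp hev).mpr hk) (Nat.not_even_iff_odd.mpr hn)
          · exact hk
        rw [hk.neg_one_pow, hn.neg_one_pow]
    rw [zsmul_eq_mul, zsmul_eq_mul, neg_pow, hkn]
    ring

lemma He_hasDerivAt (n : ℕ) (x : ℝ) :
    HasDerivAt (He n) (x * He n x - He (n + 1) x) x := by
  have h := (Polynomial.hermite n).hasDerivAt_aeval (𝕜 := ℝ) x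
  have key : (Polynomial.aeval x) (Polynomial.derivative (Polynomial.hermite n)) =
      x * He n x - He (n + 1) x := by
    have hs := Polynomial.hermite_succ n
    have : He (n + 1) x = x * He n x -
        (Polynomial.aeval x) (Polynomial.derivative (Polynomial.hermite n)) := by
      rw [He, hs]
      simp [He]
    linarith [this]
  rw [key] at h
  exact h

open MeasureTheory ProbabilityTheory in
/-- Hermite coefficients of shifted ReLU: for i ≥ 2,
E_{z~N(0,1)}[ReLU(z+b) He_i(z)] = ((−1)^i/√(2π)) e^{−b²/2} He_{i−2}(b). -/
theorem relu_hermite_coefficient (b : ℝ) (i : ℕ) (hi : 2 ≤ i) :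
    ∫ z, max (z + b) 0 * He i z ∂(gaussianReal 0 1) =
      (-1 : ℝ) ^ i / Real.sqrt (2 * Real.pi) * Real.exp (-b ^ 2 / 2) * He (i - 2) b := by
  obtain ⟨j, rfl⟩ : ∃ j, i = j + 2 := ⟨i - 2, by omega⟩
  set c : ℝ := (Real.sqrt (2 * Real.pi))⁻¹ with hc
  -- pdf formula
  have hpdf : ∀ z : ℝ, gaussianPDFReal 0 1 z = c * Gk z := by
    intro z
    simp only [gaussianPDFReal, NNReal.coe_one, mul_one, sub_zero, hc, Gk]
    congr 2
    ring
  -- Step 1: convert gaussianReal integral to Lebesgue integral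
  have h0 : ∫ z, max (z + b) 0 * He (j + 2) z ∂(gaussianReal 0 1)
      = c * ∫ z, max (z + b) 0 * He (j + 2) z * Gk z := by
    rw [gaussianReal_of_var_ne_zero 0 one_ne_zero]
    have hg : gaussianPDF 0 1 = fun x => ((gaussianPDFReal 0 1 x).toNNReal : ENNReal) := rfl
    rw [hg, integral_withDensity_eq_integral_smul
      (measurable_gaussianPDFReal 0 1).real_toNNReal]
    rw [← integral_const_mul]
    congr 1
    funext z
    rw [NNReal.smul_def, Real.coe_toNNReal _ (gaussianPDFReal_nonneg 0 1 z), hpdf z,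
      smul_eq_mul]
    ring
  rw [h0]
  -- Step 2: drop the max via an indicator
  have hind : (fun z : ℝ => max (z + b) 0 * He (j + 2) z * Gk z) =
      Set.indicator (Set.Ioi (-b)) (fun z => (z + b) * He (j + 2) z * Gk z) := by
    funext z
    by_cases hz : z ∈ Set.Ioi (-b)
    · rw [Set.indicator_of_mem hz]
      have hzb : max (z + b) 0 = z + b := max_eq_left (by rw [Set.mem_Ioi] at hz; linarith)
      rw [hzb]
    · rw [Set.indicator_of_notMem hz]
      have hzb : max (z + b) 0 = 0 := max_eq_right (by rw [Set.mem_Ioi, not_lt] at hz; linarith)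
      rw [hzb]
      ring
  rw [hind, integral_indicator measurableSet_Ioi]
  -- Step 3: fundamental theorem of calculus on (-b, ∞)
  set F : ℝ → ℝ := fun x => -((x + b) * He (j + 1) x + He j x) * Gk x with hF
  have hderiv : ∀ x ∈ Set.Ici (-b), HasDerivAt F ((x + b) * He (j + 2) x * Gk x) x := by
    intro x _
    have h1 : HasDerivAt (fun x : ℝ => x + b) 1 x := (hasDerivAt_id x).add_const b
    have h2 := He_hasDerivAt (j + 1) x
    have h3 := He_hasDerivAt j x
    have h4 := Gk_hasDerivAt x
    have h5 := (((h1.mul h2).add h3).neg.mul h4)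
    have e2 : He (j + 1 + 1) = He (j + 2) := rfl
    rw [e2] at h5
    exact h5.congr_deriv (by simp only [Pi.neg_apply, Pi.add_apply, Pi.mul_apply]; ring)
  have hq : ∀ x : ℝ, F x =
      (-((X + C b) * ((Polynomial.hermite (j + 1)).map (algebraMap ℤ ℝ)) +
        (Polynomial.hermite j).map (algebraMap ℤ ℝ))).eval x * Gk x := by
    intro x
    simp only [hF, He_eval_map, Polynomial.eval_add, Polynomial.eval_mul,
      Polynomial.eval_neg, Polynomial.eval_X, Polynomial.eval_C]
  have htend : Tendsto F atTop (nhds 0) := by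
    have := poly_mul_Gk_tendsto (-((X + C b) * ((Polynomial.hermite (j + 1)).map (algebraMap ℤ ℝ)) +
        (Polynomial.hermite j).map (algebraMap ℤ ℝ)))
    exact this.congr (fun x => (hq x).symm)
  have hint : IntegrableOn (fun x : ℝ => (x + b) * He (j + 2) x * Gk x) (Set.Ioi (-b)) := by
    have h := poly_mul_Gk_integrable ((X + C b) * ((Polynomial.hermite (j + 2)).map (algebraMap ℤ ℝ)))
    have heq : (fun x : ℝ => ((X + C b) * ((Polynomial.hermite (j + 2)).map (algebraMap ℤ ℝ))).eval x * Gk x)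
        = fun x : ℝ => (x + b) * He (j + 2) x * Gk x := by
      funext x
      simp [He_eval_map]
    rw [heq] at h
    exact h.integrableOn
  have hFTC := integral_Ioi_of_hasDerivAt_of_tendsto' hderiv hint htend
  rw [hFTC]
  -- Step 4: evaluate
  have hFb : F (-b) = -(He j (-b)) * Gk (-b) := by
    show -(((-b) + b) * He (j + 1) (-b) + He j (-b)) * Gk (-b) = -(He j (-b)) * Gk (-b)
    ring
  rw [hFb, He_neg]
  have hGkb : Gk (-b) = Real.exp (-b ^ 2 / 2) := by
    rw [Gk, neg_sq]
    congr 1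
    ring
  rw [hGkb]
  have hji : (j + 2 - 2 : ℕ) = j := by omega
  rw [hji]
  have : ((-1 : ℝ)) ^ (j + 2) = (-1) ^ j := by
    rw [pow_add]
    norm_num
  rw [this, div_eq_mul_inv]
  ring
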